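/- Let G be a finite simple graph and K ⊆ V(G). Suppose that (a) no connected component of G \ K is full for K, and (b) for every pair of non-adjacent vertices x, y ∈ K there is a connected component C of G \ K with x, y ∈ N(C). Then K is a potential maximal clique of G, i.e., K is a maximal clique of some minimal triangulation of G. -/

import Mathlib

open SimpleGraph

variable {V : Type*}

/-- `C` is a connected component of `G \ K`:
nonempty, disjoint from `K`, connected, and maximal such. -/
def IsCompOf (G : SimpleGraph V) (K C : Set V) : Prop :=
  C.Nonempty ∧ Disjoint C K ∧ (G.induce C).Connected ∧
    ∀ D : Set V, C ⊆ D → Disjoint D K → (G.induce D).Connected → D = C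

/-- The neighborhood of a set `C`: vertices outside `C` with a neighbor in `C`. -/
def nbhd (G : SimpleGraph V) (C : Set V) : Set V :=
  {v | v ∉ C ∧ ∃ u ∈ C, G.Adj u v}

/-- `C` is a full component for `K` in `G`. -/
def IsFullComp (G : SimpleGraph V) (K C : Set V) : Prop :=
  IsCompOf G K C ∧ ∀ v ∈ K, ∃ u ∈ C, G.Adj u v

/-- Bouchitté–Todinca characterization of potential maximal cliques:
(a) no full component, (b) non-adjacent pairs of `K` covered by a common component. -/
def IsPMC (G : SimpleGraph V) (K : Set V) : Prop :=
  (∀ C : Set V, IsCompOf G K C → ¬ ∀ v ∈ K, ∃ u ∈ C, G.Adj u v) ∧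
  (∀ x ∈ K, ∀ y ∈ K, x ≠ y → ¬ G.Adj x y →
    ∃ C : Set V, IsCompOf G K C ∧ (∃ u ∈ C, G.Adj u x) ∧ (∃ u ∈ C, G.Adj u y))

/-- A graph is chordal if it has no induced cycle of length at least 4. -/
def IsChordal (G : SimpleGraph V) : Prop :=
  ∀ n : ℕ, 4 ≤ n → IsEmpty (SimpleGraph.cycleGraph n ↪g G)

/-- `H` is a minimal triangulation (minimal chordal completion) of `G`. -/
def IsMinimalTriangulation (G H : SimpleGraph V) : Prop :=
  G ≤ H ∧ IsChordal H ∧ ∀ H' : SimpleGraph V, G ≤ H' → H' ≤ H → IsChordal H' → H' = H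

/-- `K` is an inclusion-maximal clique of `G`. -/
def IsMaxClique (G : SimpleGraph V) (K : Set V) : Prop :=
  G.IsClique K ∧ ∀ K' : Set V, K ⊆ K' → G.IsClique K' → K' = K

/-- `K` is a potential maximal clique of `G`: a maximal clique of some minimal
triangulation of `G`. -/
def IsPMCtri (G : SimpleGraph V) (K : Set V) : Prop :=
  ∃ H : SimpleGraph V, IsMinimalTriangulation G H ∧ IsMaxClique H K

namespace BTaux

open SimpleGraph.Walk

variable {G : SimpleGraph V}

/-- prefix of a walk -/
def wtake {u v : V} : (p : G.Walk u v) → (n : ℕ) → G.Walk u (p.getVert n)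
  | .nil, _ => .nil
  | .cons _ _, 0 => Walk.nil.copy rfl (getVert_zero _).symm
  | .cons h q, (n+1) => Walk.cons h (wtake q n)

lemma wtake_length {u v : V} (p : G.Walk u v) (n : ℕ) :
    (wtake p n).length = min n p.length := by
  induction p generalizing n with
  | nil => simp [wtake]
  | cons h q ih =>
    cases n with
    | zero => simp [wtake]
    | succ n => simp [wtake, ih, Nat.succ_min_succ]

lemma wtake_support_subset {u v : V} (p : G.Walk u v) (n : ℕ) :
    (wtake p n).support ⊆ p.support := by
  induction p generalizing n with
  | nil => simp [wtake]
  | cons h q ih =>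
    cases n with
    | zero => intro x hx; simp [wtake] at hx; simp [hx]
    | succ n =>
      intro x hx
      simp only [wtake, support_cons, List.mem_cons] at hx ⊢
      replace hx : x = _ ∨ x ∈ (wtake q n).support := List.mem_cons.mp hx
      rcases hx with h1 | h2
      · exact Or.inl h1
      · exact Or.inr (ih n h2)

lemma drop_length {u v : V} (p : G.Walk u v) (n : ℕ) :
    (p.drop n).length = p.length - n := by
  induction p generalizing n with
  | nil => simp [Walk.drop]
  | cons h q ih =>
    cases n with
    | zero => simp [Walk.drop]
    | succ n => simp [Walk.drop, ih]

lemma drop_support_subset {u v : V} (p : G.Walk u v) (n : ℕ) :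
    (p.drop n).support ⊆ p.support := by
  induction p generalizing n with
  | nil => simp [Walk.drop, Walk.getVert_of_length_le]
  | cons h q ih =>
    cases n with
    | zero => simp [Walk.drop]
    | succ n =>
      intro x hx
      simp only [Walk.drop, support_copy, support_cons, List.mem_cons] at hx ⊢
      exact Or.inr (ih n hx)

lemma getVert_injective {u v : V} {p : G.Walk u v} (hp : p.IsPath) :
    ∀ i j : ℕ, i ≤ p.length → j ≤ p.length → p.getVert i = p.getVert j → i = j := by
  induction p with
  | nil => intro i j hi hj _; simp only [Walk.length_nil, Nat.le_zero] at hi hj; omega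
  | cons h q ih =>
    intro i j hi hj hij
    have hpq : q.IsPath := hp.of_cons
    have hu : _ ∉ q.support := (Walk.cons_isPath_iff _ _).mp hp |>.2
    cases i with
    | zero =>
      cases j with
      | zero => rfl
      | succ j =>
        exfalso
        apply hu
        rw [Walk.mem_support_iff_exists_getVert]
        refine ⟨j, ?_, by simpa using hj⟩
        simpa [Walk.getVert_cons_succ] using hij.symm
    | succ i =>
      cases j with
      | zero =>
        exfalso
        apply hu
        rw [Walk.mem_support_iff_exists_getVert]
        refine ⟨i, ?_, by simpa using hi⟩
        simpa [Walk.getVert_cons_succ] using hij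
      | succ j =>
        have := ih hpq i j (by simpa using hi) (by simpa using hj)
          (by simpa [Walk.getVert_cons_succ] using hij)
        omega

/-- A walk is chordless if non-consecutive vertices are non-adjacent. -/
def Chordless {u v : V} (p : G.Walk u v) : Prop :=
  ∀ i j : ℕ, i + 1 < j → j ≤ p.length → ¬ G.Adj (p.getVert i) (p.getVert j)

end BTaux

namespace BTaux
open SimpleGraph.Walk

lemma exists_chordless_path (H : SimpleGraph V) (A : Set V) {x y : V}
    (h : ∃ p : H.Walk x y, ∀ v ∈ p.support, v ∈ insert x (insert y A)) :
    ∃ p : H.Walk x y, p.IsPath ∧ (∀ v ∈ p.support, v ∈ insert x (insert y A)) ∧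
      Chordless p := by
  classical
  set S : Set ℕ := {m | ∃ p : H.Walk x y,
    (∀ v ∈ p.support, v ∈ insert x (insert y A)) ∧ p.length = m} with hS
  have hSne : ∃ m, m ∈ S := by
    obtain ⟨p, hp⟩ := h
    exact ⟨p.length, p, hp, rfl⟩
  let n₀ := Nat.find hSne
  obtain ⟨p, hpsupp, hplen⟩ : n₀ ∈ S := Nat.find_spec hSne
  have hmin : ∀ m < n₀, m ∉ S := fun m hm => Nat.find_min hSne hm
  set q := p.bypass with hq
  have hqpath : q.IsPath := Walk.bypass_isPath p
  have hqsupp : ∀ v ∈ q.support, v ∈ insert x (insert y A) :=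
    fun v hv => hpsupp v (Walk.support_bypass_subset p hv)
  have hqlen : q.length = n₀ := by
    have h1 : q.length ≤ n₀ := hplen ▸ Walk.length_bypass_le p
    have h2 : ¬ q.length < n₀ := fun hlt => hmin q.length hlt ⟨q, hqsupp, rfl⟩
    omega
  refine ⟨q, hqpath, hqsupp, ?_⟩
  intro i j hij hjle hadj
  have hjle' : j ≤ n₀ := hqlen ▸ hjle
  set r : H.Walk x y := (wtake q i).append (Walk.cons hadj (q.drop j)) with hr
  have hrlen : r.length < n₀ := by
    rw [hr, Walk.length_append, Walk.length_cons, wtake_length, drop_length, hqlen]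
    omega
  apply hmin r.length hrlen
  refine ⟨r, ?_, rfl⟩
  intro v hv
  rw [hr, Walk.support_append] at hv
  rcases List.mem_append.mp hv with hv | hv
  · exact hqsupp v (wtake_support_subset q i hv)
  · have hv' := List.tail_subset _ hv
    rw [Walk.support_cons] at hv'
    rcases List.mem_cons.mp hv' with hv' | hv'
    · subst hv'
      apply hqsupp
      rw [Walk.mem_support_iff_exists_getVert]
      exact ⟨i, rfl, by omega⟩
    · exact hqsupp v (drop_support_subset q j hv')

end BTaux

namespace BTaux
open SimpleGraph.Walk

variable {G : SimpleGraph V} {K : Set V}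

lemma reachable_induce_of_walk {C : Set V} {a b : V} (p : G.Walk a b)
    (hsupp : ∀ v ∈ p.support, v ∈ C) (ha : a ∈ C) (hb : b ∈ C) :
    (G.induce C).Reachable ⟨a, ha⟩ ⟨b, hb⟩ := by
  induction p with
  | nil => rfl
  | @cons a c b h q ih =>
    have hc : c ∈ C := hsupp c (by simp)
    have h1 : (G.induce C).Adj ⟨a, ha⟩ ⟨c, hc⟩ := h
    exact (h1.reachable).trans (ih (fun v hv => hsupp v (by simp [hv])) hc hb)

lemma exists_walk_of_induce_reachable {C : Set V} {a b : V} (ha : a ∈ C) (hb : b ∈ C)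
    (h : (G.induce C).Reachable ⟨a, ha⟩ ⟨b, hb⟩) :
    ∃ p : G.Walk a b, ∀ v ∈ p.support, v ∈ C := by
  obtain ⟨w⟩ := h
  let f : G.induce C →g G := ⟨fun v => v.1, fun h => h⟩
  refine ⟨w.map f, ?_⟩
  intro v hv
  rw [Walk.support_map] at hv
  obtain ⟨u, _, rfl⟩ := List.mem_map.mp hv
  exact u.2

def compSet (G : SimpleGraph V) (K : Set V) (v : V) : Set V :=
  {w | ∃ p : G.Walk v w, ∀ x ∈ p.support, x ∉ K}

lemma mem_compSet_self {v : V} (hv : v ∉ K) : v ∈ compSet G K v :=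
  ⟨Walk.nil, by simp [hv]⟩

lemma compSet_disjoint (v : V) : Disjoint (compSet G K v) K := by
  rw [Set.disjoint_left]
  rintro w ⟨p, hp⟩ hwK
  exact hp w p.end_mem_support hwK

lemma mem_compSet_of_walk {v a b : V} (hab : a ∈ compSet G K v) (p : G.Walk a b)
    (hp : ∀ x ∈ p.support, x ∉ K) : b ∈ compSet G K v := by
  obtain ⟨q, hq⟩ := hab
  refine ⟨q.append p, ?_⟩
  intro x hx
  rw [Walk.support_append] at hx
  rcases List.mem_append.mp hx with hx | hx
  · exact hq x hx
  · exact hp x (List.tail_subset _ hx)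

lemma support_subset_compSet {v w : V} (p : G.Walk v w) (hp : ∀ x ∈ p.support, x ∉ K) :
    ∀ u ∈ p.support, u ∈ compSet G K v := by
  classical
  intro u hu
  refine ⟨p.takeUntil u hu, ?_⟩
  intro x hx
  exact hp x (Walk.support_takeUntil_subset p hu hx)

lemma compSet_isCompOf {v : V} (hv : v ∉ K) : IsCompOf G K (compSet G K v) := by
  refine ⟨⟨v, mem_compSet_self hv⟩, compSet_disjoint v, ?_, ?_⟩
  · rw [connected_iff]
    refine ⟨?_, ⟨⟨v, mem_compSet_self hv⟩⟩⟩
    rintro ⟨a, pa, hpa⟩ ⟨b, pb, hpb⟩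
    have h1 : ∀ x ∈ pa.support, x ∈ compSet G K v := support_subset_compSet pa hpa
    have h2 : ∀ x ∈ pb.support, x ∈ compSet G K v := support_subset_compSet pb hpb
    have hcomb : ∀ x ∈ (pa.reverse.append pb).support, x ∈ compSet G K v := by
      intro x hx
      rw [Walk.support_append] at hx
      rcases List.mem_append.mp hx with hx | hx
      · exact h1 x (by rwa [Walk.support_reverse, List.mem_reverse] at hx)
      · exact h2 x (List.tail_subset _ hx)
    exact reachable_induce_of_walk (pa.reverse.append pb) hcomb _ _
  · intro D hsub hdisj hconn
    apply Set.Subset.antisymm _ hsub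
    intro w hw
    have hvD : v ∈ D := hsub (mem_compSet_self hv)
    obtain ⟨p, hp⟩ := exists_walk_of_induce_reachable hvD hw
      (hconn.preconnected ⟨v, hvD⟩ ⟨w, hw⟩)
    exact ⟨p, fun x hx => Set.disjoint_left.mp hdisj (hp x hx)⟩

lemma isCompOf_eq_compSet {C : Set V} (hC : IsCompOf G K C) {v : V} (hv : v ∈ C) :
    C = compSet G K v := by
  obtain ⟨hne, hdisj, hconn, hmax⟩ := hC
  have hvK : v ∉ K := Set.disjoint_left.mp hdisj hv
  have hsub : C ⊆ compSet G K v := by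
    intro w hw
    obtain ⟨p, hp⟩ := exists_walk_of_induce_reachable hv hw (hconn.preconnected ⟨v, hv⟩ ⟨w, hw⟩)
    exact ⟨p, fun x hx => Set.disjoint_left.mp hdisj (hp x hx)⟩
  have := hmax (compSet G K v) hsub (compSet_disjoint v)
    ((compSet_isCompOf hvK).2.2.1)
  exact this.symm

lemma isCompOf_unique {C C' : Set V} (hC : IsCompOf G K C) (hC' : IsCompOf G K C')
    {v : V} (hv : v ∈ C) (hv' : v ∈ C') : C = C' := by
  rw [isCompOf_eq_compSet hC hv, isCompOf_eq_compSet hC' hv']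

lemma not_adj_of_comps_ne {C C' : Set V} (hC : IsCompOf G K C) (hC' : IsCompOf G K C')
    (hne : C ≠ C') {u w : V} (hu : u ∈ C) (hw : w ∈ C') : ¬ G.Adj u w := by
  intro hadj
  apply hne
  have huK : u ∉ K := Set.disjoint_left.mp hC.2.1 hu
  have hwK : w ∉ K := Set.disjoint_left.mp hC'.2.1 hw
  have hwC : w ∈ compSet G K u := by
    refine ⟨Walk.cons hadj Walk.nil, ?_⟩
    intro x hx
    simp only [Walk.support_cons, Walk.support_nil, List.mem_cons, List.mem_singleton] at hx
    rcases hx with rfl | hx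
    · exact huK
    · simp at hx; subst hx; exact hwK
  rw [isCompOf_eq_compSet hC hu]
  exact isCompOf_unique (compSet_isCompOf huK) hC' hwC hw

lemma nbhd_subset_of_comp {C : Set V} (hC : IsCompOf G K C) : nbhd G C ⊆ K := by
  intro w hw
  obtain ⟨hwC, u, huC, hadj⟩ := hw
  by_contra hwK
  have hwcomp := compSet_isCompOf (G := G) hwK
  have hCw : C = compSet G K w := by
    apply isCompOf_unique hC hwcomp huC
    refine ⟨Walk.cons hadj.symm Walk.nil, ?_⟩
    intro x hx
    simp only [Walk.support_cons, Walk.support_nil, List.mem_cons] at hx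
    rcases hx with rfl | hx
    · exact hwK
    · simp at hx; subst hx; exact Set.disjoint_left.mp hC.2.1 huC
  exact hwC (hCw ▸ mem_compSet_self hwK)

lemma exists_comp_of_not_mem {v : V} (hv : v ∉ K) :
    ∃ C, IsCompOf G K C ∧ v ∈ C :=
  ⟨compSet G K v, compSet_isCompOf hv, mem_compSet_self hv⟩

end BTaux

namespace BTaux

variable {G : SimpleGraph V} {K : Set V}

/-- The canonical chordal completion: complete `K` and each `C ∪ N(C)`. -/
def H0 (G : SimpleGraph V) (K : Set V) : SimpleGraph V where
  Adj u v := u ≠ v ∧ ((u ∈ K ∧ v ∈ K) ∨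
    ∃ C, IsCompOf G K C ∧ u ∈ C ∪ nbhd G C ∧ v ∈ C ∪ nbhd G C)
  symm := by
    constructor
    rintro u v ⟨hne, h⟩
    refine ⟨hne.symm, ?_⟩
    rcases h with ⟨h1, h2⟩ | ⟨C, hC, h1, h2⟩
    · exact Or.inl ⟨h2, h1⟩
    · exact Or.inr ⟨C, hC, h2, h1⟩
  loopless := ⟨fun v h => h.1 rfl⟩

lemma le_H0 : G ≤ H0 G K := by
  intro u v huv
  refine ⟨G.ne_of_adj huv, ?_⟩
  by_cases hu : u ∈ K
  · by_cases hv : v ∈ K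
    · exact Or.inl ⟨hu, hv⟩
    · obtain ⟨C, hC, hvC⟩ := exists_comp_of_not_mem (G := G) hv
      refine Or.inr ⟨C, hC, Or.inr ⟨?_, v, hvC, huv.symm⟩, Or.inl hvC⟩
      exact fun huC => Set.disjoint_left.mp hC.2.1 huC hu
  · obtain ⟨C, hC, huC⟩ := exists_comp_of_not_mem (G := G) hu
    refine Or.inr ⟨C, hC, Or.inl huC, ?_⟩
    by_cases hvC : v ∈ C
    · exact Or.inl hvC
    · exact Or.inr ⟨hvC, u, huC, huv⟩

lemma H0_adj_of_K {x y : V} (hx : x ∈ K) (hy : y ∈ K) (hne : x ≠ y) : (H0 G K).Adj x y :=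
  ⟨hne, Or.inl ⟨hx, hy⟩⟩

lemma H0_adj_of_bag {C : Set V} (hC : IsCompOf G K C) {u v : V}
    (hu : u ∈ C ∪ nbhd G C) (hv : v ∈ C ∪ nbhd G C) (hne : u ≠ v) : (H0 G K).Adj u v :=
  ⟨hne, Or.inr ⟨C, hC, hu, hv⟩⟩

/-- Neighbors (in `H0`) of a vertex of a component `C` lie in `C ∪ N(C)`. -/
lemma H0_nbr {C : Set V} (hC : IsCompOf G K C) {u w : V} (hu : u ∈ C)
    (h : (H0 G K).Adj u w) : w ∈ C ∪ nbhd G C := by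
  have huK : u ∉ K := Set.disjoint_left.mp hC.2.1 hu
  obtain ⟨hne, h⟩ := h
  rcases h with ⟨h1, _⟩ | ⟨C', hC', h1, h2⟩
  · exact absurd h1 huK
  · have huC' : u ∈ C' := by
      rcases h1 with h1 | h1
      · exact h1
      · exact absurd (nbhd_subset_of_comp hC' h1) huK
    rwa [isCompOf_unique hC hC' hu huC']

lemma H0_chordal : IsChordal (H0 G K) := by
  intro n hn
  obtain ⟨m, rfl⟩ : ∃ m, n = m + 4 := ⟨n - 4, by omega⟩
  constructor
  intro f
  have hadj_iff : ∀ u v : Fin (m+4), (cycleGraph (m+4)).Adj u v ↔ (u - v = 1 ∨ v - u = 1) :=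
    fun u v => @SimpleGraph.cycleGraph_adj (m+2) u v
  have hval2 : ((1+1 : Fin (m+4))).val = 2 := by
    rw [Fin.add_def, Fin.val_one]; exact Nat.mod_eq_of_lt (by omega)
  have hvalneg2 : ((-(1+1) : Fin (m+4))).val = m + 2 := by
    rw [neg_eq_zero_sub, Fin.sub_def, hval2]
    simp only [Fin.val_zero, Nat.add_zero]
    exact Nat.mod_eq_of_lt (by omega)
  have h2ne1 : (1 + 1 : Fin (m+4)) ≠ 1 := by
    intro h; rw [← Fin.val_eq_val, hval2, Fin.val_one] at h; omega
  have h2ne0 : (1 + 1 : Fin (m+4)) ≠ 0 := by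
    intro h; rw [← Fin.val_eq_val, hval2, Fin.val_zero] at h; omega
  have hneg2ne1 : (-(1 + 1) : Fin (m+4)) ≠ 1 := by
    intro h; rw [← Fin.val_eq_val, hvalneg2, Fin.val_one] at h; omega
  -- two positions at distance two are distinct and non-adjacent
  have key : ∀ s t : Fin (m+4), t - s = 1 + 1 → s ≠ t ∧ ¬ (cycleGraph (m+4)).Adj s t := by
    intro s t hts
    constructor
    · intro h; subst h; rw [sub_self] at hts; exact h2ne0 hts.symm
    · rw [hadj_iff]
      rintro (h | h)
      · apply hneg2ne1
        rw [← hts, neg_sub]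
        exact h
      · rw [hts] at h; exact h2ne1 h
  -- every vertex of the cycle together with facts
  have hmapped : ∀ u v : Fin (m+4), (H0 G K).Adj (f u) (f v) ↔ (cycleGraph (m+4)).Adj u v :=
    fun u v => f.map_rel_iff
  by_cases hK : ∀ i : Fin (m+4), f i ∈ K
  · -- all in K: chord between i and i + 2
    have i0 : Fin (m+4) := ⟨0, by omega⟩
    obtain ⟨hne, hnadj⟩ := key i0 (i0 + (1+1)) (by abel)
    apply hnadj
    rw [← hmapped]
    exact H0_adj_of_K (hK _) (hK _) (fun h => hne (f.injective h))
  · push_neg at hK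
    obtain ⟨i, hi⟩ := hK
    obtain ⟨C, hC, hiC⟩ := exists_comp_of_not_mem (G := G) hi
    -- both neighbors of i on the cycle are in the bag of C
    have hprev : (H0 G K).Adj (f i) (f (i - 1)) := by
      rw [hmapped, hadj_iff]
      exact Or.inl (by abel)
    have hnext : (H0 G K).Adj (f i) (f (i + 1)) := by
      rw [hmapped, hadj_iff]
      exact Or.inr (by abel)
    have hprevbag : f (i - 1) ∈ C ∪ nbhd G C := H0_nbr hC hiC hprev
    have hnextbag : f (i + 1) ∈ C ∪ nbhd G C := H0_nbr hC hiC hnext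
    obtain ⟨hne, hnadj⟩ := key (i - 1) (i + 1) (by abel)
    exact hnadj ((hmapped _ _).mp
      (H0_adj_of_bag hC hprevbag hnextbag (fun h => hne (f.injective h))))

end BTaux

namespace BTaux
open SimpleGraph.Walk

variable {H : SimpleGraph V}

lemma cyc_adj_nat {n : ℕ} (hn : 4 ≤ n) (k l : Fin n) (hkl : k.val ≤ l.val) :
    (cycleGraph n).Adj k l ↔ (l.val = k.val + 1 ∨ (k.val = 0 ∧ l.val = n - 1)) := by
  have hk := k.isLt
  have hl := l.isLt
  rcases Nat.eq_or_lt_of_le hkl with heq | hlt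
  · have : k = l := Fin.ext heq
    subst this
    simp only [SimpleGraph.irrefl, false_iff]
    omega
  · have hsub1 : (k - l).val = n - l.val + k.val := by
      rw [Fin.sub_def]
      exact Nat.mod_eq_of_lt (by omega)
    have hsub2 : (l - k).val = l.val - k.val := by
      rw [Fin.sub_def]
      show (n - k.val + l.val) % n = l.val - k.val
      have h1 : n - k.val + l.val = n + (l.val - k.val) := by omega
      rw [h1, Nat.add_mod_left]
      exact Nat.mod_eq_of_lt (by omega)
    rw [SimpleGraph.cycleGraph_adj', hsub1, hsub2]
    omega

lemma glue {x y : V} (p q : H.Walk x y)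
    (hp : p.IsPath) (hq : q.IsPath) (hpc : Chordless p) (hqc : Chordless q)
    (hpl : 2 ≤ p.length) (hql : 2 ≤ q.length)
    (hxy : ¬ H.Adj x y)
    (hcross : ∀ i j, 0 < i → i < p.length → 0 < j → j < q.length →
      p.getVert i ≠ q.getVert j ∧ ¬ H.Adj (p.getVert i) (q.getVert j)) :
    ¬ IsChordal H := by
  intro hch
  set a := p.length with ha
  set b := q.length with hb
  set n := a + b with hn
  have hn4 : 4 ≤ n := by omega
  set cnat : ℕ → V := fun m => if m ≤ a then p.getVert m else q.getVert (n - m) with hcnat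
  have hc_hi : ∀ m, a ≤ m → m ≤ n → cnat m = q.getVert (n - m) := by
    intro m h1 h2
    rcases Nat.eq_or_lt_of_le h1 with rfl | hlt
    · simp only [hcnat, le_refl, if_pos]
      rw [Walk.getVert_length]
      have h3 : n - a = b := by omega
      rw [h3]
      exact (Walk.getVert_length q).symm
    · simp only [hcnat]
      rw [if_neg (by omega)]
  have hc_zero : cnat 0 = x := by simp [hcnat]
  have hc_q_zero : cnat 0 = q.getVert 0 := by rw [hc_zero, Walk.getVert_zero]
  -- injectivity at ℕ level
  have hinj : ∀ i j : ℕ, i < j → j < n → cnat i ≠ cnat j := by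
    intro i j hij hjn
    by_cases hja : j ≤ a
    · simp only [hcnat, if_pos (le_trans (le_of_lt hij) hja), if_pos hja]
      intro h
      have := getVert_injective hp i j (by omega) (by omega) h
      omega
    · push_neg at hja
      have hcj : cnat j = q.getVert (n - j) := hc_hi j (by omega) (by omega)
      by_cases hia : a ≤ i
      · rw [hcj, hc_hi i hia (by omega)]
        intro h
        have := getVert_injective hq (n - i) (n - j) (by omega) (by omega) h
        omega
      · push_neg at hia
        have hci : cnat i = p.getVert i := by simp [hcnat, le_of_lt hia]
        rw [hci, hcj]
        rcases Nat.eq_zero_or_pos i with rfl | hipos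
        · rw [Walk.getVert_zero]
          intro h
          have := getVert_injective hq 0 (n - j) (by omega) (by omega) ((q.getVert_zero).trans h)
          omega
        · exact (hcross i (n - j) hipos hia (by omega) (by omega)).1
  -- adjacency at ℕ level
  have hadj_consec : ∀ i : ℕ, i + 1 < n → H.Adj (cnat i) (cnat (i+1)) := by
    intro i hi
    by_cases hia : i + 1 ≤ a
    · simp only [hcnat, if_pos (by omega : i ≤ a), if_pos hia]
      exact p.adj_getVert_succ (by omega)
    · push_neg at hia
      rw [hc_hi i (by omega) (by omega), hc_hi (i+1) (by omega) (by omega)]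
      have h2 := (q.adj_getVert_succ (i := n - (i+1)) (by omega)).symm
      have h1 : n - (i+1) + 1 = n - i := by omega
      rwa [h1] at h2
  have hadj_wrap : H.Adj (cnat 0) (cnat (n - 1)) := by
    rw [hc_q_zero, hc_hi (n-1) (by omega) (by omega)]
    have h2 := q.adj_getVert_succ (i := 0) (by omega)
    have h1 : (0:ℕ) + 1 = n - (n - 1) := by omega
    rwa [h1] at h2
  have hnadj : ∀ i j : ℕ, i ≤ j → j < n → j ≠ i + 1 → ¬(i = 0 ∧ j = n - 1) →
      ¬ H.Adj (cnat i) (cnat j) := by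
    intro i j hij hjn hne1 hne2
    rcases Nat.eq_or_lt_of_le hij with rfl | hlt
    · intro h
      exact H.irrefl h
    · have hij2 : i + 2 ≤ j := by omega
      by_cases hja : j ≤ a
      · simp only [hcnat, if_pos (by omega : i ≤ a), if_pos hja]
        exact hpc i j (by omega) (by omega)
      · push_neg at hja
        have hcj : cnat j = q.getVert (n - j) := hc_hi j (by omega) (by omega)
        by_cases hia : a ≤ i
        · rw [hcj, hc_hi i hia (by omega)]
          intro h
          exact hqc (n - j) (n - i) (by omega) (by omega) h.symm
        · push_neg at hia
          have hci : cnat i = p.getVert i := by simp [hcnat, le_of_lt hia]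
          rw [hci, hcj]
          rcases Nat.eq_zero_or_pos i with rfl | hipos
          · have hj2 : n - j ≥ 2 := by omega
            have h5 := hqc 0 (n - j) (by omega) (by omega)
            rw [Walk.getVert_zero] at h5 ⊢
            exact h5
          · exact (hcross i (n - j) hipos hia (by omega) (by omega)).2
  -- build the embedding
  have hemb : Nonempty (cycleGraph n ↪g H) := by
    refine ⟨⟨⟨fun k => cnat k.val, ?_⟩, ?_⟩⟩
    · intro k l h
      by_contra hkl
      rcases Nat.lt_or_ge k.val l.val with h1 | h1
      · exact hinj k.val l.val h1 l.isLt h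
      · have h2 : l.val < k.val := by
          rcases Nat.eq_or_lt_of_le h1 with heq | h2
          · exact absurd (Fin.ext heq.symm) hkl
          · exact h2
        exact hinj l.val k.val h2 k.isLt h.symm
    · intro k l
      show H.Adj (cnat k.val) (cnat l.val) ↔ (cycleGraph n).Adj k l
      rcases le_or_gt k.val l.val with hkl | hkl
      · rw [cyc_adj_nat hn4 k l hkl]
        constructor
        · intro h
          by_contra hcon
          push_neg at hcon
          exact hnadj k.val l.val hkl l.isLt hcon.1 (by
            intro ⟨h1, h2⟩; exact hcon.2 h1 h2) h
        · rintro (h | ⟨h1, h2⟩)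
          · have hlt : k.val + 1 < n := by rw [← h]; exact l.isLt
            rw [h]
            exact hadj_consec k.val hlt
          · rw [h1, h2]
            exact hadj_wrap
      · have hsymm : (cycleGraph n).Adj k l ↔ (cycleGraph n).Adj l k := adj_comm _ _ _
        rw [hsymm, cyc_adj_nat hn4 l k (le_of_lt hkl)]
        constructor
        · intro h
          by_contra hcon
          push_neg at hcon
          exact hnadj l.val k.val (le_of_lt hkl) k.isLt hcon.1 (by
            intro ⟨h1, h2⟩; exact hcon.2 h1 h2) h.symm
        · rintro (h | ⟨h1, h2⟩)
          · have hlt : l.val + 1 < n := by rw [← h]; exact k.isLt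
            rw [h]
            exact (hadj_consec l.val hlt).symm
          · rw [h1, h2]
            exact hadj_wrap.symm
  exact (hch n hn4).false hemb.some

end BTaux

namespace BTaux
open SimpleGraph.Walk

variable {G : SimpleGraph V} {K : Set V}

lemma support_mapLe {H : SimpleGraph V} (h : G ≤ H) {u v : V} (p : G.Walk u v) :
    (p.mapLe h).support = p.support := by
  unfold Walk.mapLe
  rw [Walk.support_map]
  have : ∀ l : List V, List.map (⇑(SimpleGraph.Hom.ofLE h)) l = l := by
    intro l; induction l with
    | nil => rfl
    | cons a l ih => simp [ih]
  exact this _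

/-- In any chordal graph between `G` and `H0 G K`, the set `K` is a clique. -/
lemma K_clique_of_chordal {H : SimpleGraph V}
    (ha : ∀ C : Set V, IsCompOf G K C → ¬ ∀ v ∈ K, ∃ u ∈ C, G.Adj u v)
    (hb : ∀ x ∈ K, ∀ y ∈ K, x ≠ y → ¬ G.Adj x y →
      ∃ C : Set V, IsCompOf G K C ∧ x ∈ nbhd G C ∧ y ∈ nbhd G C)
    (hGH : G ≤ H) (hH0 : H ≤ H0 G K) (hch : IsChordal H)
    {x y : V} (hx : x ∈ K) (hy : y ∈ K) (hxy : x ≠ y) : H.Adj x y := by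
  by_contra hnadj
  have hGxy : ¬ G.Adj x y := fun h => hnadj (hGH h)
  obtain ⟨C, hC, hxC, hyC⟩ := hb x hx y hy hxy hGxy
  obtain ⟨z, hz, hzC⟩ : ∃ z ∈ K, ∀ u ∈ C, ¬ G.Adj u z := by
    have h := ha C hC
    push_neg at h
    obtain ⟨z, hz1, hz2⟩ := h
    exact ⟨z, hz1, fun u hu hadj => hz2 u hu hadj⟩
  obtain ⟨hxnC, u, huC, hux⟩ := hxC
  obtain ⟨hynC, v, hvC, hvy⟩ := hyC
  have hzx : z ≠ x := fun h => hzC u huC (h ▸ hux)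
  have hzy : z ≠ y := fun h => hzC v hvC (h ▸ hvy)
  have hznC : z ∉ C := fun h => Set.disjoint_left.mp hC.2.1 h hz
  have hznN : z ∉ nbhd G C := fun ⟨_, u', hu', hadj⟩ => hzC u' hu' hadj
  -- first path: from x to y through C
  obtain ⟨w0, hw0⟩ := exists_walk_of_induce_reachable huC hvC
    (hC.2.2.1.preconnected ⟨u, huC⟩ ⟨v, hvC⟩)
  have hp_ex : ∃ p : H.Walk x y, ∀ t ∈ p.support, t ∈ insert x (insert y C) := by
    refine ⟨(Walk.cons hux.symm (w0.append (Walk.cons hvy Walk.nil))).mapLe hGH, ?_⟩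
    intro t ht
    rw [support_mapLe] at ht
    rw [Walk.support_cons] at ht
    rcases List.mem_cons.mp ht with rfl | ht
    · exact Set.mem_insert _ _
    · rw [Walk.support_append] at ht
      rcases List.mem_append.mp ht with ht | ht
      · exact Set.mem_insert_of_mem _ (Set.mem_insert_of_mem _ (hw0 t ht))
      · have := List.tail_subset _ ht
        rw [Walk.support_cons] at this
        rcases List.mem_cons.mp this with rfl | h'
        · exact Set.mem_insert_of_mem _ (Set.mem_insert_of_mem _ hvC)
        · simp only [Walk.support_nil, List.mem_singleton] at h'
          subst h'
          exact Set.mem_insert_of_mem _ (Set.mem_insert _ _)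
  obtain ⟨p, hpp, hpsupp, hpc⟩ := exists_chordless_path H C hp_ex
  -- halves from x (resp. y) to z avoiding C
  have half : ∀ t, t ∈ K → t ≠ z → t ∈ nbhd G C →
      ∃ D : Set V, (∀ s ∈ D, ∃ C', IsCompOf G K C' ∧ C' ≠ C ∧ s ∈ C') ∧
        ∃ w : G.Walk t z, ∀ s ∈ w.support, s = t ∨ s = z ∨ s ∈ D := by
    intro t ht htz htC
    by_cases hadj : G.Adj t z
    · refine ⟨∅, by simp, Walk.cons hadj Walk.nil, ?_⟩
      intro s hs
      simp only [Walk.support_cons, Walk.support_nil, List.mem_cons, List.mem_singleton] at hs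
      tauto
    · obtain ⟨C₂, hC₂, htC₂, hzC₂⟩ := hb t ht z hz htz hadj
      have hC₂ne : C₂ ≠ C := by
        rintro rfl
        obtain ⟨_, u', hu', hadj'⟩ := hzC₂
        exact hzC u' hu' hadj'
      obtain ⟨_, u₂, hu₂, hu₂t⟩ := htC₂
      obtain ⟨_, v₂, hv₂, hv₂z⟩ := hzC₂
      obtain ⟨w₂, hw₂⟩ := exists_walk_of_induce_reachable hu₂ hv₂
        (hC₂.2.2.1.preconnected ⟨u₂, hu₂⟩ ⟨v₂, hv₂⟩)
      refine ⟨C₂, fun s hs => ⟨C₂, hC₂, hC₂ne, hs⟩,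
        Walk.cons hu₂t.symm (w₂.append (Walk.cons hv₂z Walk.nil)), ?_⟩
      intro s hs
      rw [Walk.support_cons] at hs
      rcases List.mem_cons.mp hs with rfl | hs
      · exact Or.inl rfl
      · rw [Walk.support_append] at hs
        rcases List.mem_append.mp hs with hs | hs
        · exact Or.inr (Or.inr (hw₂ s hs))
        · have := List.tail_subset _ hs
          rw [Walk.support_cons] at this
          rcases List.mem_cons.mp this with rfl | h'
          · exact Or.inr (Or.inr hv₂)
          · simp only [Walk.support_nil, List.mem_singleton] at h'
            subst h'
            exact Or.inr (Or.inl rfl)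
  obtain ⟨D1, hD1, w1, hw1⟩ := half x hx (Ne.symm hzx) ⟨hxnC, u, huC, hux⟩
  obtain ⟨D2, hD2, w2, hw2⟩ := half y hy (Ne.symm hzy) ⟨hynC, v, hvC, hvy⟩
  set B : Set V := D1 ∪ D2 ∪ {z} with hB
  have hBprop : ∀ s ∈ B, s ∉ C ∧ s ∉ nbhd G C := by
    intro s hs
    rcases hs with (hs | hs) | hs
    · obtain ⟨C', hC', hne, hsC'⟩ := hD1 s hs
      constructor
      · intro hsC; exact hne (isCompOf_unique hC' hC hsC' hsC)
      · intro hsN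
        exact Set.disjoint_left.mp hC'.2.1 hsC' (nbhd_subset_of_comp hC hsN)
    · obtain ⟨C', hC', hne, hsC'⟩ := hD2 s hs
      constructor
      · intro hsC; exact hne (isCompOf_unique hC' hC hsC' hsC)
      · intro hsN
        exact Set.disjoint_left.mp hC'.2.1 hsC' (nbhd_subset_of_comp hC hsN)
    · simp only [Set.mem_singleton_iff] at hs
      subst hs
      exact ⟨hznC, hznN⟩
  have hq_ex : ∃ q : H.Walk x y, ∀ t ∈ q.support, t ∈ insert x (insert y B) := by
    refine ⟨(w1.append w2.reverse).mapLe hGH, ?_⟩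
    intro t ht
    rw [support_mapLe, Walk.support_append] at ht
    rcases List.mem_append.mp ht with ht | ht
    · rcases hw1 t ht with rfl | rfl | ht
      · exact Set.mem_insert _ _
      · exact Set.mem_insert_of_mem _ (Set.mem_insert_of_mem _ (Or.inr rfl))
      · exact Set.mem_insert_of_mem _ (Set.mem_insert_of_mem _ (Or.inl (Or.inl ht)))
    · have ht' := List.tail_subset _ ht
      rw [Walk.support_reverse, List.mem_reverse] at ht'
      rcases hw2 t ht' with rfl | rfl | ht''
      · exact Set.mem_insert_of_mem _ (Set.mem_insert _ _)
      · exact Set.mem_insert_of_mem _ (Set.mem_insert_of_mem _ (Or.inr rfl))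
      · exact Set.mem_insert_of_mem _ (Set.mem_insert_of_mem _ (Or.inl (Or.inr ht'')))
  obtain ⟨q, hqp, hqsupp, hqc⟩ := exists_chordless_path H B hq_ex
  -- lengths are at least 2
  have hlen2 : ∀ (r : H.Walk x y), 2 ≤ r.length := by
    intro r
    by_contra hlt
    push_neg at hlt
    have h0 : r.length = 0 ∨ r.length = 1 := by omega
    rcases h0 with h | h
    · exact hxy (Walk.eq_of_length_eq_zero h)
    · apply hnadj
      have h2 := r.adj_getVert_succ (i := 0) (by omega)
      rwa [Walk.getVert_zero, show (0+1 : ℕ) = r.length from by omega,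
        Walk.getVert_length] at h2
  -- interior vertices
  have hp_int : ∀ i, 0 < i → i < p.length → p.getVert i ∈ C := by
    intro i h1 h2
    have hmem : p.getVert i ∈ p.support :=
      Walk.mem_support_iff_exists_getVert.mpr ⟨i, rfl, by omega⟩
    rcases hpsupp _ hmem with h | h | h
    · exfalso
      have : p.getVert i = p.getVert 0 := by rw [Walk.getVert_zero]; exact h
      have := getVert_injective hpp i 0 (by omega) (by omega) this
      omega
    · exfalso
      have : p.getVert i = p.getVert p.length := by rw [Walk.getVert_length]; exact h
      have := getVert_injective hpp i p.length (by omega) (by omega) this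
      omega
    · exact h
  have hq_int : ∀ j, 0 < j → j < q.length → q.getVert j ∈ B := by
    intro j h1 h2
    have hmem : q.getVert j ∈ q.support :=
      Walk.mem_support_iff_exists_getVert.mpr ⟨j, rfl, by omega⟩
    rcases hqsupp _ hmem with h | h | h
    · exfalso
      have : q.getVert j = q.getVert 0 := by rw [Walk.getVert_zero]; exact h
      have := getVert_injective hqp j 0 (by omega) (by omega) this
      omega
    · exfalso
      have : q.getVert j = q.getVert q.length := by rw [Walk.getVert_length]; exact h
      have := getVert_injective hqp j q.length (by omega) (by omega) this
      omega
    · exact h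
  -- glue
  refine glue p q hpp hqp hpc hqc (hlen2 p) (hlen2 q) hnadj ?_ hch
  intro i j h1 h2 h3 h4
  have hpi := hp_int i h1 h2
  have hqj := hq_int j h3 h4
  obtain ⟨hqjC, hqjN⟩ := hBprop _ hqj
  constructor
  · intro h
    exact hqjC (h ▸ hpi)
  · intro h
    rcases H0_nbr hC hpi (hH0 h) with h' | h'
    · exact hqjC h'
    · exact hqjN h'

end BTaux

theorem stmt2 [Fintype V] (G : SimpleGraph V) (K : Set V)
    (ha : ∀ C : Set V, IsCompOf G K C → ¬ ∀ v ∈ K, ∃ u ∈ C, G.Adj u v)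
    (hb : ∀ x ∈ K, ∀ y ∈ K, x ≠ y → ¬ G.Adj x y →
      ∃ C : Set V, IsCompOf G K C ∧ x ∈ nbhd G C ∧ y ∈ nbhd G C) :
    IsPMCtri G K := by
  classical
  set S : Set (SimpleGraph V) := {H | G ≤ H ∧ H ≤ BTaux.H0 G K ∧ IsChordal H} with hS
  have hSne : S.Nonempty := ⟨BTaux.H0 G K, BTaux.le_H0, le_rfl, BTaux.H0_chordal⟩
  have hSfin : S.Finite := Set.toFinite S
  obtain ⟨H, hHS, hmin⟩ := Set.Finite.exists_minimalFor id S hSfin hSne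
  obtain ⟨hGH, hH0, hch⟩ := hHS
  have hclique : H.IsClique K := by
    intro x hx y hy hxy
    exact BTaux.K_clique_of_chordal ha hb hGH hH0 hch hx hy hxy
  refine ⟨H, ⟨hGH, hch, ?_⟩, hclique, ?_⟩
  · intro H' h1 h2 h3
    have hH'S : H' ∈ S := ⟨h1, le_trans h2 hH0, h3⟩
    exact le_antisymm h2 (hmin hH'S h2)
  · intro K' hKK' hK'clique
    have hK'K : K' ⊆ K := by
      by_contra hsub
      obtain ⟨v, hvK', hvK⟩ := Set.not_subset.mp hsub
      have hCcomp := BTaux.compSet_isCompOf (G := G) hvK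
      apply ha _ hCcomp
      intro k hk
      have hvk : v ≠ k := fun h => hvK (h ▸ hk)
      have hadj : H.Adj v k := hK'clique hvK' (hKK' hk) hvk
      have hbag := BTaux.H0_nbr hCcomp (BTaux.mem_compSet_self hvK) (hH0 hadj)
      rcases hbag with h | h
      · exact absurd hk (fun hkK =>
          Set.disjoint_left.mp hCcomp.2.1 h hkK)
      · obtain ⟨_, u, hu, hadj'⟩ := h
        exact ⟨u, hu, hadj'⟩
    exact Set.Subset.antisymm hK'K hKK'
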